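/- Let 𝒳 ⊆ ℝ^n be a nonempty convex set, α > 0, G ≥ 0, let f : ℝ^n → ℝ be convex and differentiable at x₀ ∈ 𝒳 with ‖∇f(x₀)‖ ≤ G, let λ ∈ ℝ^m with λ ≥ 0, let g : ℝ^n → ℝ^m have convex components, let x⁺ minimize ⟨∇f(x₀), x − x₀⟩ + ⟨λ, g(x)⟩ + ‖x − x₀‖²/(2α) over 𝒳, and let x* ∈ 𝒳 satisfy g(x*) ≤ 0. Then f(x₀) + ⟨λ, g(x⁺)⟩ ≤ f(x*) + (‖x* − x₀‖² − ‖x* − x⁺‖²)/(2α) + α·G²/2. -/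

import Mathlib

open scoped RealInnerProductSpace

section Aux

variable {E : Type*} [NormedAddCommGroup E] [InnerProductSpace ℝ E]

/-- Squared norm of a convex combination. -/
lemma norm_combo_sq (u v : E) (t : ℝ) :
    ‖(1 - t) • u + t • v‖ ^ 2
      = (1 - t) * ‖u‖ ^ 2 + t * ‖v‖ ^ 2 - t * (1 - t) * ‖v - u‖ ^ 2 := by
  have h1 : ‖(1 - t) • u + t • v‖ ^ 2
      = ‖(1 - t) • u‖ ^ 2 + 2 * ⟪(1 - t) • u, t • v⟫ + ‖t • v‖ ^ 2 :=
    norm_add_sq_real _ _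
  have h2 : ‖v - u‖ ^ 2 = ‖v‖ ^ 2 - 2 * ⟪v, u⟫ + ‖u‖ ^ 2 := norm_sub_sq_real v u
  have e1 : ‖(1 - t) • u‖ ^ 2 = (1 - t) ^ 2 * ‖u‖ ^ 2 := by
    rw [norm_smul, Real.norm_eq_abs, mul_pow, sq_abs]
  have e2 : ‖t • v‖ ^ 2 = t ^ 2 * ‖v‖ ^ 2 := by
    rw [norm_smul, Real.norm_eq_abs, mul_pow, sq_abs]
  have e3 : ⟪(1 - t) • u, t • v⟫ = (1 - t) * t * ⟪v, u⟫ := by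
    rw [real_inner_smul_left, real_inner_smul_right, real_inner_comm]; ring
  rw [h1, e1, e2, e3, h2]; ring

/-- Gradient inequality for a convex differentiable function. -/
lemma grad_ineq [CompleteSpace E] {f : E → ℝ} (hf : ConvexOn ℝ Set.univ f)
    {x : E} (hd : DifferentiableAt ℝ f x) (y : E) :
    f x + ⟪gradient f x, y - x⟫ ≤ f y := by
  set v := y - x with hv
  set φ : ℝ → ℝ := fun t => f (x + t • v) with hφdef
  have hline : HasDerivAt (fun t : ℝ => x + t • v) v 0 := by
    simpa using ((hasDerivAt_id (0 : ℝ)).smul_const v).const_add x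
  have hF : HasFDerivAt f (fderiv ℝ f x) (x + (0 : ℝ) • v) := by
    simpa using hd.hasFDerivAt
  have hφ : HasDerivAt φ (fderiv ℝ f x v) 0 := hF.comp_hasDerivAt 0 hline
  have hval : (fderiv ℝ f x) v = ⟪gradient f x, v⟫ := by
    rw [← InnerProductSpace.toDual_apply_apply, gradient, LinearIsometryEquiv.apply_symm_apply]
  -- slopes are bounded by f y - f x on (0,1)
  have hslope : ∀ t ∈ Set.Ioo (0:ℝ) 1, slope φ 0 t ≤ f y - f x := by
    intro t ht
    have hcomb : x + t • v = (1 - t) • x + t • y := by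
      simp [hv, smul_sub, sub_smul]; abel
    have hconv := hf.2 (Set.mem_univ x) (Set.mem_univ y)
      (by linarith [ht.2] : (0:ℝ) ≤ 1 - t) ht.1.le (by ring)
    have hφt : φ t ≤ (1 - t) * f x + t * f y := by
      rw [hφdef]; simp only []; rw [hcomb]; simpa using hconv
    have : slope φ 0 t = (φ t - φ 0) / t := by
      simp [slope_def_field]
    rw [this]
    have hφ0 : φ 0 = f x := by simp [hφdef]
    rw [div_le_iff₀ ht.1, hφ0]
    nlinarith [ht.1]
  have htend : Filter.Tendsto (slope φ 0) (nhdsWithin 0 (Set.Ioi 0)) (nhds (fderiv ℝ f x v)) := by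
    have := hasDerivAt_iff_tendsto_slope.mp hφ
    exact this.mono_left (nhdsWithin_mono _ (by intro a ha; exact ne_of_gt ha))
  have hle : fderiv ℝ f x v ≤ f y - f x := by
    refine le_of_tendsto htend ?_
    filter_upwards [Ioo_mem_nhdsGT_of_mem (by norm_num : (0:ℝ) ∈ Set.Ico 0 1)] with t ht
    exact hslope t ht
  rw [hval] at hle
  linarith

/-- Strongly convex minimization improvement. -/
lemma strong_min {X : Set E} (hX : Convex ℝ X) {ψ : E → ℝ} (hψ : ConvexOn ℝ Set.univ ψ)
    {α : ℝ} (hα : 0 < α) {x₀ xp xs : E} (hxp : xp ∈ X) (hxs : xs ∈ X)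
    (hmin : ∀ z ∈ X, ψ xp + ‖xp - x₀‖ ^ 2 / (2 * α) ≤ ψ z + ‖z - x₀‖ ^ 2 / (2 * α)) :
    ψ xp + ‖xp - x₀‖ ^ 2 / (2 * α) + ‖xs - xp‖ ^ 2 / (2 * α)
      ≤ ψ xs + ‖xs - x₀‖ ^ 2 / (2 * α) := by
  set a : ℝ := ‖xp - x₀‖ ^ 2 / (2 * α) with ha
  set b : ℝ := ‖xs - x₀‖ ^ 2 / (2 * α) with hb
  set c : ℝ := ‖xs - xp‖ ^ 2 / (2 * α) with hc
  have hcnn : 0 ≤ c := div_nonneg (sq_nonneg _) (by linarith)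
  have key : ∀ t : ℝ, t ∈ Set.Ioo (0:ℝ) 1 → ψ xp + a + (1 - t) * c ≤ ψ xs + b := by
    intro t ht
    set z : E := (1 - t) • xp + t • xs with hz
    have hzX : z ∈ X := hX hxp hxs (by linarith [ht.2]) ht.1.le (by ring)
    have hmz := hmin z hzX
    have hψz : ψ z ≤ (1 - t) * ψ xp + t * ψ xs := by
      simpa using hψ.2 (Set.mem_univ xp) (Set.mem_univ xs)
        (by linarith [ht.2] : (0:ℝ) ≤ 1 - t) ht.1.le (by ring)
    have hnorm : ‖z - x₀‖ ^ 2
        = (1 - t) * ‖xp - x₀‖ ^ 2 + t * ‖xs - x₀‖ ^ 2 - t * (1 - t) * ‖xs - xp‖ ^ 2 := by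
      have hzx : z - x₀ = (1 - t) • (xp - x₀) + t • (xs - x₀) := by
        rw [hz]; simp [smul_sub, sub_smul]; abel
      rw [hzx, norm_combo_sq]
      congr 2
      rw [show xs - x₀ - (xp - x₀) = xs - xp by abel]
    have hdiv : ‖z - x₀‖ ^ 2 / (2 * α) = (1 - t) * a + t * b - t * (1 - t) * c := by
      rw [hnorm, ha, hb, hc]; ring
    rw [hdiv] at hmz
    nlinarith [hmz, hψz, ht.1, ht.2]
  by_contra hcon
  push_neg at hcon
  set ε : ℝ := ψ xp + a + c - (ψ xs + b) with hε
  have hεpos : 0 < ε := by rw [hε]; linarith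
  set t : ℝ := min (ε / (2 * (c + 1))) (1 / 2) with htdef
  have htpos : 0 < t := lt_min (div_pos hεpos (by linarith)) (by norm_num)
  have htlt : t < 1 := lt_of_le_of_lt (min_le_right _ _) (by norm_num)
  have htc : t * c ≤ ε / 2 := by
    have h1 : t ≤ ε / (2 * (c + 1)) := min_le_left _ _
    have h2 : t * c ≤ ε / (2 * (c + 1)) * c := mul_le_mul_of_nonneg_right h1 hcnn
    have h3 : ε / (2 * (c + 1)) * c ≤ ε / 2 := by
      rw [div_mul_eq_mul_div, div_le_div_iff₀ (by linarith) (by norm_num)]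
      nlinarith
    linarith
  have := key t ⟨htpos, htlt⟩
  nlinarith

end Aux

/-- Per-slot regret bound at a MOSP step (inequality (39) in the proof of Theorem 2). -/
theorem per_slot_regret_bound {n m : ℕ} (hm : 0 < m)
    (X : Set (EuclideanSpace ℝ (Fin n))) (hXne : X.Nonempty) (hXconv : Convex ℝ X)
    (α G : ℝ) (hα : 0 < α) (hG : 0 ≤ G)
    (f : EuclideanSpace ℝ (Fin n) → ℝ) (hfconv : ConvexOn ℝ Set.univ f)
    (x₀ : EuclideanSpace ℝ (Fin n)) (hx₀ : x₀ ∈ X)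
    (hfdiff : DifferentiableAt ℝ f x₀) (hgrad : ‖gradient f x₀‖ ≤ G)
    (lam : EuclideanSpace ℝ (Fin m)) (hlam : ∀ i, 0 ≤ lam i)
    (g : EuclideanSpace ℝ (Fin n) → EuclideanSpace ℝ (Fin m))
    (hgconv : ∀ i, ConvexOn ℝ Set.univ fun x => g x i)
    (xp : EuclideanSpace ℝ (Fin n)) (hxpX : xp ∈ X)
    (hxpmin : ∀ z ∈ X,
      ⟪gradient f x₀, xp - x₀⟫ + ⟪lam, g xp⟫ + ‖xp - x₀‖ ^ 2 / (2 * α) ≤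
        ⟪gradient f x₀, z - x₀⟫ + ⟪lam, g z⟫ + ‖z - x₀‖ ^ 2 / (2 * α))
    (xs : EuclideanSpace ℝ (Fin n)) (hxsX : xs ∈ X) (hxsfeas : ∀ i, g xs i ≤ 0) :
    f x₀ + ⟪lam, g xp⟫ ≤
      f xs + (‖xs - x₀‖ ^ 2 - ‖xs - xp‖ ^ 2) / (2 * α) + α * G ^ 2 / 2 := by
  set c := gradient f x₀ with hc
  set ψ : EuclideanSpace ℝ (Fin n) → ℝ := fun z => ⟪c, z - x₀⟫ + ⟪lam, g z⟫ with hψdef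
  -- inner product with lam as a sum
  have hinner : ∀ y : EuclideanSpace ℝ (Fin m), ⟪lam, y⟫ = ∑ i, lam i * y i := by
    intro y; simp [PiLp.inner_apply, RCLike.inner_apply]; exact Finset.sum_congr rfl fun i _ => mul_comm _ _
  -- ψ is convex
  have hψconv : ConvexOn ℝ (Set.univ : Set (EuclideanSpace ℝ (Fin n))) ψ := by
    apply ConvexOn.add
    · refine ⟨convex_univ, fun x _ y _ p q hp hq hpq => ?_⟩
      apply le_of_eq
      simp only [inner_sub_right, inner_add_right, real_inner_smul_right, smul_eq_mul]
      linear_combination (⟪c, x₀⟫ : ℝ) * hpq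
    · have heq : (fun z => (⟪lam, g z⟫ : ℝ)) = fun z => ∑ i, lam i * g z i := by
        funext z; exact hinner (g z)
      have hsum : ConvexOn ℝ (Set.univ : Set (EuclideanSpace ℝ (Fin n)))
          (∑ i : Fin m, fun z => lam i * g z i) :=
        Finset.sum_induction _ _ (fun a b ha hb => ha.add hb)
          (convexOn_const 0 convex_univ) (fun i _ => by
            simpa [smul_eq_mul] using (hgconv i).smul (hlam i))
      have heq2 : (fun z => ∑ i : Fin m, lam i * g z i)
          = ∑ i : Fin m, fun z => lam i * g z i := by
        funext z; rw [Finset.sum_apply]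
      rw [heq, heq2]; exact hsum
  -- minimizer hypothesis in ψ form
  have hmin : ∀ z ∈ X, ψ xp + ‖xp - x₀‖ ^ 2 / (2 * α) ≤ ψ z + ‖z - x₀‖ ^ 2 / (2 * α) := by
    intro z hz
    have := hxpmin z hz
    simp only [hψdef]
    linarith
  have hB := strong_min hXconv hψconv hα hxpX hxsX hmin
  -- feasibility: ⟪lam, g xs⟫ ≤ 0
  have hfeas : (⟪lam, g xs⟫ : ℝ) ≤ 0 := by
    rw [hinner]
    apply Finset.sum_nonpos
    intro i _
    exact mul_nonpos_of_nonneg_of_nonpos (hlam i) (hxsfeas i)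
  -- gradient inequality
  have hA : f x₀ + ⟪c, xs - x₀⟫ ≤ f xs := grad_ineq hfconv hfdiff xs
  -- Young's inequality
  have hyoung : -⟪c, xp - x₀⟫ - ‖xp - x₀‖ ^ 2 / (2 * α) ≤ α * G ^ 2 / 2 := by
    set u := xp - x₀ with hu
    have h1 : -⟪c, u⟫ ≤ ‖c‖ * ‖u‖ := by
      have := real_inner_le_norm (-c) u
      simpa [inner_neg_left] using this
    have h2 : ‖c‖ * ‖u‖ ≤ α * G ^ 2 / 2 + ‖u‖ ^ 2 / (2 * α) := by
      have hsum : α * G ^ 2 / 2 + ‖u‖ ^ 2 / (2 * α) = (α ^ 2 * G ^ 2 + ‖u‖ ^ 2) / (2 * α) := by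
        field_simp
      rw [hsum, le_div_iff₀ (by linarith)]
      nlinarith [sq_nonneg (α * ‖c‖ - ‖u‖), mul_le_mul hgrad hgrad (norm_nonneg c) hG,
        sq_nonneg α, hα.le, norm_nonneg c, norm_nonneg u]
    linarith
  -- assemble
  have hsplit : (‖xs - x₀‖ ^ 2 - ‖xs - xp‖ ^ 2) / (2 * α)
      = ‖xs - x₀‖ ^ 2 / (2 * α) - ‖xs - xp‖ ^ 2 / (2 * α) := sub_div _ _ _
  rw [hsplit]
  simp only [hψdef] at hB
  linarith
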